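/- For p ≥ 3 and real numbers a, b, one has |a + b|^p ≥ |a|^p + |b|^p + p·|a|^{p-2}·a·b + p·|b|^{p-2}·b·a whenever |b| ≤ |a|, and hence (using symmetry of the right-hand side in a and b) for all real a, b. -/

import Mathlib

open Real Set

private lemma contRpow {r : ℝ} (hr : 0 ≤ r) : Continuous fun x : ℝ => x ^ r :=
  continuous_iff_continuousAt.2 fun x => Real.continuousAt_rpow_const x r (Or.inr hr)

private lemma monoAux {c : ℝ} (hc : 0 < c) {f f' : ℝ → ℝ}
    (hcont : ContinuousOn f (Icc 0 c))
    (hd : ∀ x ∈ Ioo (0:ℝ) c, HasDerivAt f (f' x) x)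
    (hnn : ∀ x ∈ Ioo (0:ℝ) c, 0 ≤ f' x) : f 0 ≤ f c := by
  have hm : MonotoneOn f (Icc 0 c) := by
    apply monotoneOn_of_deriv_nonneg (convex_Icc 0 c) hcont
    · intro x hx
      rw [interior_Icc] at hx
      exact (hd x hx).differentiableAt.differentiableWithinAt
    · intro x hx
      rw [interior_Icc] at hx
      rw [(hd x hx).deriv]
      exact hnn x hx
  exact hm (left_mem_Icc.2 hc.le) (right_mem_Icc.2 hc.le) hc.le

/-- Bernoulli step: for r ≥ 1, x > 0, y ≥ 0. -/
private lemma L1 {r x y : ℝ} (hr : 1 ≤ r) (hx : 0 < x) (hy : 0 ≤ y) :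
    x ^ r + r * x ^ (r - 1) * y ≤ (x + y) ^ r := by
  have hs0 : (0:ℝ) ≤ y / x := by positivity
  have hs : (-1:ℝ) ≤ y / x := by linarith
  have hb := one_add_mul_self_le_rpow_one_add hs hr
  have hxr : (0:ℝ) < x ^ r := Real.rpow_pos_of_pos hx r
  have hxy : (x + y) ^ r = x ^ r * (1 + y / x) ^ r := by
    rw [← Real.mul_rpow hx.le (by positivity)]
    rw [mul_add, mul_one, mul_div_cancel₀ _ hx.ne']
  rw [hxy]
  have h2 : x ^ r * (1 + r * (y / x)) ≤ x ^ r * (1 + y / x) ^ r :=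
    mul_le_mul_of_nonneg_left hb hxr.le
  refine le_trans (le_of_eq ?_) h2
  have : x ^ (r - 1) = x ^ r / x := by
    rw [Real.rpow_sub hx, Real.rpow_one]
  rw [this]
  field_simp

/-- Second level: for q ≥ 2, x, y ≥ 0. -/
private lemma L2 {q x y : ℝ} (hq : 2 ≤ q) (hx : 0 ≤ x) (hy : 0 ≤ y) :
    x ^ q + y ^ q + q * x ^ (q - 1) * y ≤ (x + y) ^ q := by
  rcases hx.eq_or_lt with rfl | hx
  · have h1 : (0:ℝ) ^ q = 0 := Real.zero_rpow (by linarith)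
    have h2 : (0:ℝ) ^ (q - 1) = 0 := Real.zero_rpow (by linarith)
    simp [h1, h2]
  set f : ℝ → ℝ := fun x => (x + y) ^ q - x ^ q - q * x ^ (q - 1) * y with hf
  have hderiv : ∀ t ∈ Ioo (0:ℝ) x, HasDerivAt f
      (q * (t + y) ^ (q - 1) - q * t ^ (q - 1) - q * ((q - 1) * t ^ (q - 2)) * y) t := by
    intro t ht
    have ht0 : (0:ℝ) < t := ht.1
    have h1 : HasDerivAt (fun s : ℝ => (s + y) ^ q) (q * (t + y) ^ (q - 1)) t := by
      have := (HasDerivAt.rpow_const ((hasDerivAt_id t).add_const y)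
        (p := q) (Or.inl (by positivity)))
      simpa using this
    have h2 : HasDerivAt (fun s : ℝ => s ^ q) (q * t ^ (q - 1)) t :=
      Real.hasDerivAt_rpow_const (Or.inl ht0.ne')
    have h3 : HasDerivAt (fun s : ℝ => q * s ^ (q - 1) * y)
        (q * ((q - 1) * t ^ (q - 2)) * y) t := by
      have hb : HasDerivAt (fun s : ℝ => s ^ (q - 1)) ((q - 1) * t ^ (q - 1 - 1)) t :=
        Real.hasDerivAt_rpow_const (Or.inl ht0.ne')
      have : q - 1 - 1 = q - 2 := by ring
      rw [this] at hb
      exact (hb.const_mul q).mul_const y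
    exact (h1.sub h2).sub h3
  have hnn : ∀ t ∈ Ioo (0:ℝ) x,
      0 ≤ q * (t + y) ^ (q - 1) - q * t ^ (q - 1) - q * ((q - 1) * t ^ (q - 2)) * y := by
    intro t ht
    have hL := L1 (r := q - 1) (x := t) (y := y) (by linarith) ht.1 hy
    have : q - 1 - 1 = q - 2 := by ring
    rw [this] at hL
    have hq0 : (0:ℝ) ≤ q := by linarith
    nlinarith [mul_le_mul_of_nonneg_left hL hq0]
  have hcont : ContinuousOn f (Icc 0 x) := by
    apply ContinuousOn.sub
    apply ContinuousOn.sub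
    · exact ((contRpow (by linarith : (0:ℝ) ≤ q)).comp (continuous_id.add continuous_const)).continuousOn
    · exact (contRpow (by linarith : (0:ℝ) ≤ q)).continuousOn
    · exact ((continuous_const.mul (contRpow (by linarith : (0:ℝ) ≤ q - 1))).mul continuous_const).continuousOn
  have key := monoAux hx hcont hderiv hnn
  have h0 : f 0 = y ^ q := by
    simp only [hf, zero_add]
    rw [Real.zero_rpow (by linarith : q ≠ 0), Real.zero_rpow (by linarith : q - 1 ≠ 0)]
    ring
  rw [h0] at key
  simp only [hf] at key
  linarith

/-- Lemma A: for p ≥ 3, x, y ≥ 0. -/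
private lemma LA {p x y : ℝ} (hp : 3 ≤ p) (hx : 0 ≤ x) (hy : 0 ≤ y) :
    x ^ p + y ^ p + p * x ^ (p - 1) * y + p * x * y ^ (p - 1) ≤ (x + y) ^ p := by
  rcases hx.eq_or_lt with rfl | hx
  · have h1 : (0:ℝ) ^ p = 0 := Real.zero_rpow (by linarith)
    have h2 : (0:ℝ) ^ (p - 1) = 0 := Real.zero_rpow (by linarith)
    simp [h1, h2]
  set f : ℝ → ℝ := fun x => (x + y) ^ p - x ^ p - p * x ^ (p - 1) * y - p * x * y ^ (p - 1)
    with hf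
  have hderiv : ∀ t ∈ Ioo (0:ℝ) x, HasDerivAt f
      (p * (t + y) ^ (p - 1) - p * t ^ (p - 1) - p * ((p - 1) * t ^ (p - 2)) * y
        - p * y ^ (p - 1)) t := by
    intro t ht
    have ht0 : (0:ℝ) < t := ht.1
    have h1 : HasDerivAt (fun s : ℝ => (s + y) ^ p) (p * (t + y) ^ (p - 1)) t := by
      have := (HasDerivAt.rpow_const ((hasDerivAt_id t).add_const y)
        (p := p) (Or.inl (by positivity)))
      simpa using this
    have h2 : HasDerivAt (fun s : ℝ => s ^ p) (p * t ^ (p - 1)) t :=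
      Real.hasDerivAt_rpow_const (Or.inl ht0.ne')
    have h3 : HasDerivAt (fun s : ℝ => p * s ^ (p - 1) * y)
        (p * ((p - 1) * t ^ (p - 2)) * y) t := by
      have hb : HasDerivAt (fun s : ℝ => s ^ (p - 1)) ((p - 1) * t ^ (p - 1 - 1)) t :=
        Real.hasDerivAt_rpow_const (Or.inl ht0.ne')
      have : p - 1 - 1 = p - 2 := by ring
      rw [this] at hb
      exact (hb.const_mul p).mul_const y
    have h4 : HasDerivAt (fun s : ℝ => p * s * y ^ (p - 1)) (p * y ^ (p - 1)) t := by
      have := ((hasDerivAt_id t).const_mul p).mul_const (y ^ (p - 1))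
      simpa using this
    exact ((h1.sub h2).sub h3).sub h4
  have hnn : ∀ t ∈ Ioo (0:ℝ) x,
      0 ≤ p * (t + y) ^ (p - 1) - p * t ^ (p - 1) - p * ((p - 1) * t ^ (p - 2)) * y
        - p * y ^ (p - 1) := by
    intro t ht
    have hL := L2 (q := p - 1) (x := t) (y := y) (by linarith) ht.1.le hy
    have : p - 1 - 1 = p - 2 := by ring
    rw [this] at hL
    have hp0 : (0:ℝ) ≤ p := by linarith
    nlinarith [mul_le_mul_of_nonneg_left hL hp0]
  have hcont : ContinuousOn f (Icc 0 x) := by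
    apply ContinuousOn.sub
    apply ContinuousOn.sub
    apply ContinuousOn.sub
    · exact ((contRpow (by linarith : (0:ℝ) ≤ p)).comp (continuous_id.add continuous_const)).continuousOn
    · exact (contRpow (by linarith : (0:ℝ) ≤ p)).continuousOn
    · exact ((continuous_const.mul (contRpow (by linarith : (0:ℝ) ≤ p - 1))).mul continuous_const).continuousOn
    · exact ((continuous_const.mul continuous_id).mul continuous_const).continuousOn
  have key := monoAux hx hcont hderiv hnn
  have h0 : f 0 = y ^ p := by
    simp only [hf, zero_add]
    rw [Real.zero_rpow (by linarith : p ≠ 0), Real.zero_rpow (by linarith : p - 1 ≠ 0)]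
    ring
  rw [h0] at key
  simp only [hf] at key
  linarith

/-- Lemma B: for p ≥ 3, 0 ≤ y ≤ x. -/
private lemma LB {p x y : ℝ} (hp : 3 ≤ p) (hy : 0 ≤ y) (hyx : y ≤ x) :
    x ^ p + y ^ p - p * x ^ (p - 1) * y - p * x * y ^ (p - 1) ≤ (x - y) ^ p := by
  rcases hy.eq_or_lt with rfl | hy
  · have h2 : (0:ℝ) ^ p = 0 := Real.zero_rpow (by linarith)
    have h3 : (0:ℝ) ^ (p - 1) = 0 := Real.zero_rpow (by linarith)
    simp [h2, h3]
  have hx : 0 < x := lt_of_lt_of_le hy hyx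
  set g : ℝ → ℝ := fun t => (x - t) ^ p + p * x ^ (p - 1) * t + p * x * t ^ (p - 1) - t ^ p
    with hg
  have hderiv : ∀ t ∈ Ioo (0:ℝ) y, HasDerivAt g
      (-(p * (x - t) ^ (p - 1)) + p * x ^ (p - 1) + p * x * ((p - 1) * t ^ (p - 2))
        - p * t ^ (p - 1)) t := by
    intro t ht
    have ht0 : (0:ℝ) < t := ht.1
    have hxt : (0:ℝ) < x - t := by
      have := ht.2; linarith
    have h1 : HasDerivAt (fun s : ℝ => (x - s) ^ p) (-(p * (x - t) ^ (p - 1))) t := by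
      have := (HasDerivAt.rpow_const ((hasDerivAt_id t).const_sub x)
        (p := p) (Or.inl hxt.ne'))
      simpa using this
    have h2 : HasDerivAt (fun s : ℝ => p * x ^ (p - 1) * s) (p * x ^ (p - 1)) t := by
      simpa using (hasDerivAt_id t).const_mul (p * x ^ (p - 1))
    have h3 : HasDerivAt (fun s : ℝ => p * x * s ^ (p - 1))
        (p * x * ((p - 1) * t ^ (p - 2))) t := by
      have hb : HasDerivAt (fun s : ℝ => s ^ (p - 1)) ((p - 1) * t ^ (p - 1 - 1)) t :=
        Real.hasDerivAt_rpow_const (Or.inl ht0.ne')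
      have : p - 1 - 1 = p - 2 := by ring
      rw [this] at hb
      exact hb.const_mul (p * x)
    have h4 : HasDerivAt (fun s : ℝ => s ^ p) (p * t ^ (p - 1)) t :=
      Real.hasDerivAt_rpow_const (Or.inl ht0.ne')
    exact ((h1.add h2).add h3).sub h4
  have hnn : ∀ t ∈ Ioo (0:ℝ) y,
      0 ≤ -(p * (x - t) ^ (p - 1)) + p * x ^ (p - 1) + p * x * ((p - 1) * t ^ (p - 2))
        - p * t ^ (p - 1) := by
    intro t ht
    have ht0 : (0:ℝ) < t := ht.1
    have hxt : (0:ℝ) ≤ x - t := by have := ht.2; linarith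
    have hp0 : (0:ℝ) < p := by linarith
    have e1 : (x - t) ^ (p - 1) ≤ x ^ (p - 1) :=
      Real.rpow_le_rpow hxt (by linarith) (by linarith)
    have e2 : t ^ (p - 1) ≤ (p - 1) * (x * t ^ (p - 2)) := by
      have : t ^ (p - 1) = t ^ (p - 2) * t := by
        rw [← Real.rpow_add_one ht0.ne' (p-2)]
        congr 1
        ring
      rw [this]
      have h1 : t ^ (p - 2) * t ≤ t ^ (p - 2) * x := by
        have := Real.rpow_nonneg ht0.le (p - 2)
        nlinarith [ht.2, hyx]
      have h2 : x * t ^ (p - 2) ≤ (p - 1) * (x * t ^ (p - 2)) := by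
        have : (0:ℝ) ≤ x * t ^ (p - 2) := by positivity
        nlinarith
      linarith
    nlinarith [mul_le_mul_of_nonneg_left e1 hp0.le, mul_le_mul_of_nonneg_left e2 hp0.le]
  have hcont : ContinuousOn g (Icc 0 y) := by
    apply ContinuousOn.sub
    apply ContinuousOn.add
    apply ContinuousOn.add
    · exact ((contRpow (by linarith : (0:ℝ) ≤ p)).comp (continuous_const.sub continuous_id)).continuousOn
    · exact (continuous_const.mul continuous_id).continuousOn
    · exact (continuous_const.mul (contRpow (by linarith : (0:ℝ) ≤ p - 1))).continuousOn
    · exact (contRpow (by linarith : (0:ℝ) ≤ p)).continuousOn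
  have key := monoAux hy hcont hderiv hnn
  have h0 : g 0 = x ^ p := by
    simp only [hg]
    rw [Real.zero_rpow (by linarith : p ≠ 0), Real.zero_rpow (by linarith : p - 1 ≠ 0)]
    ring
  rw [h0] at key
  simp only [hg] at key
  linarith

theorem stmt5 (p a b : ℝ) (hp : 3 ≤ p) :
    |a + b| ^ p ≥ |a| ^ p + |b| ^ p + p * (Real.sign a * |a| ^ (p - 1)) * b
      + p * (Real.sign b * |b| ^ (p - 1)) * a := by
  rcases lt_trichotomy a 0 with ha | rfl | ha
  · rcases lt_trichotomy b 0 with hb | rfl | hb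
    · -- a < 0, b < 0
      rw [Real.sign_of_neg ha, Real.sign_of_neg hb, abs_of_neg ha, abs_of_neg hb,
        abs_of_neg (by linarith : a + b < 0)]
      have h := LA (x := -a) (y := -b) hp (by linarith) (by linarith)
      have : -(a + b) = -a + -b := by ring
      rw [this]
      nlinarith [h]
    · -- b = 0
      simp only [Real.sign_zero, abs_zero, add_zero, zero_mul, mul_zero, zero_mul]
      rw [Real.zero_rpow (by linarith : p ≠ 0)]
      ring_nf
      exact le_rfl
    · -- a < 0 < b
      rw [Real.sign_of_neg ha, Real.sign_of_pos hb, abs_of_neg ha, abs_of_pos hb]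
      rcases le_total (a + b) 0 with hab | hab
      · rw [abs_of_nonpos hab]
        have h := LB (x := -a) (y := b) hp hb.le (by linarith)
        have : -(a + b) = -a - b := by ring
        rw [this]
        nlinarith [h]
      · rw [abs_of_nonneg hab]
        have h := LB (x := b) (y := -a) hp (by linarith) (by linarith)
        have : a + b = b - -a := by ring
        rw [this]
        nlinarith [h]
  · -- a = 0
    simp only [Real.sign_zero, abs_zero, zero_add, zero_mul, mul_zero, add_zero]
    rw [Real.zero_rpow (by linarith : p ≠ 0)]
    ring_nf
    exact le_rfl
  · rcases lt_trichotomy b 0 with hb | rfl | hb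
    · -- b < 0 < a
      rw [Real.sign_of_pos ha, Real.sign_of_neg hb, abs_of_pos ha, abs_of_neg hb]
      rcases le_total (a + b) 0 with hab | hab
      · rw [abs_of_nonpos hab]
        have h := LB (x := -b) (y := a) hp ha.le (by linarith)
        have : -(a + b) = -b - a := by ring
        rw [this]
        nlinarith [h]
      · rw [abs_of_nonneg hab]
        have h := LB (x := a) (y := -b) hp (by linarith) (by linarith)
        have : a + b = a - -b := by ring
        rw [this]
        nlinarith [h]
    · -- b = 0
      simp only [Real.sign_zero, abs_zero, add_zero, zero_mul, mul_zero]
      rw [Real.zero_rpow (by linarith : p ≠ 0)]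
      ring_nf
      exact le_rfl
    · -- 0 < a, 0 < b
      rw [Real.sign_of_pos ha, Real.sign_of_pos hb, abs_of_pos ha, abs_of_pos hb,
        abs_of_pos (by linarith : (0:ℝ) < a + b)]
      nlinarith [LA (x := a) (y := b) hp ha.le hb.le]
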